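/- Let g ∈ {4,5}. If G ∈ F_{i,j} for some integers i ≥ 1 and 0 ≤ j ≤ i, then for every edge e of G, φ(G − e) ≤ t_g·|E(G)| + ε_g(G) − 1, where G − e denotes deletion of the edge e. -/

import Mathlib

open SimpleGraph

namespace InducedForest

/-- A graph is subcubic if every vertex has at most 3 neighbours. -/
def Subcubic {V : Type} (G : SimpleGraph V) : Prop := ∀ v : V, (G.neighborSet v).ncard ≤ 3

/-- A graph is cubic if every vertex has exactly 3 neighbours. -/
def Cubic {V : Type} (G : SimpleGraph V) : Prop := ∀ v : V, (G.neighborSet v).ncard = 3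

/-- `S` is a feedback vertex set of `G` iff `G - S` is a forest. -/
def IsFVS {V : Type} (G : SimpleGraph V) (S : Set V) : Prop := (G.induce Sᶜ).IsAcyclic

/-- `φ(G)`: the minimum size of a feedback vertex set of `G`. -/
noncomputable def fvs {V : Type} (G : SimpleGraph V) : ℕ :=
  sInf {n : ℕ | ∃ S : Set V, IsFVS G S ∧ S.ncard = n}

/-- `a(G)`: the maximum number of vertices of an induced forest in `G`. -/
noncomputable def indForestNum {V : Type} (G : SimpleGraph V) : ℕ :=
  sSup {n : ℕ | ∃ S : Set V, (G.induce S).IsAcyclic ∧ S.ncard = n}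

/-- `v` is a cut-vertex of `G`: deleting it increases the number of connected components. -/
def IsCutVertex {V : Type} (G : SimpleGraph V) (v : V) : Prop :=
  Nat.card G.ConnectedComponent < Nat.card (G.induce {u | u ≠ v}).ConnectedComponent

/-- `B` is a block of `G`: a maximal set of vertices inducing a connected subgraph
without cut-vertices. -/
def IsBlock {V : Type} (G : SimpleGraph V) (B : Set V) : Prop :=
  ((G.induce B).Connected ∧ ∀ v, ¬ IsCutVertex (G.induce B) v) ∧
  ∀ B' : Set V, B ⊆ B' →
    ((G.induce B').Connected ∧ ∀ v, ¬ IsCutVertex (G.induce B') v) → B' = B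

/-- 2-connectedness: at least 3 vertices and removing fewer than 2 vertices
leaves a connected graph. -/
def TwoConnected {V : Type} (G : SimpleGraph V) : Prop :=
  3 ≤ Nat.card V ∧ ∀ s : Set V, s.ncard < 2 → (G.induce sᶜ).Connected

/-- 3-connectedness: at least 4 vertices and removing fewer than 3 vertices
leaves a connected graph. -/
def ThreeConnected {V : Type} (G : SimpleGraph V) : Prop :=
  4 ≤ Nat.card V ∧ ∀ s : Set V, s.ncard < 3 → (G.induce sᶜ).Connected

/-- The graph obtained from `H` by subdividing the edge `xy` once;
the subdivision vertex is `none`. -/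
def subdivide {V : Type} (H : SimpleGraph V) (x y : V) : SimpleGraph (Option V) :=
  SimpleGraph.fromRel (fun p q =>
    match p, q with
    | some u, some v => H.Adj u v ∧ s(u, v) ≠ s(x, y)
    | some u, none => u = x ∨ u = y
    | _, _ => False)

/-- `G` is obtained from `H` by subdividing one edge once. -/
def IsSubdivisionOfOneEdge {V W : Type} (H : SimpleGraph V) (G : SimpleGraph W) : Prop :=
  ∃ x y : V, H.Adj x y ∧ Nonempty (G ≃g subdivide H x y)

/-- The graph obtained from `K` by adding one new vertex (`none`)
joined to all vertices of `S`. -/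
def addApex {V : Type} (K : SimpleGraph V) (S : Set V) : SimpleGraph (Option V) :=
  SimpleGraph.fromRel (fun p q =>
    match p, q with
    | some u, some v => K.Adj u v
    | some u, none => u ∈ S
    | _, _ => False)

/-- `G` is (isomorphic to) `H ∘ (e1, e2, a)`: subdivide `e1` and `e2` once each
(with `e1` subdivided twice if `e1 = e2`) and add a new vertex adjacent to `a` and to the
two subdivision vertices. -/
def IsCircOp {V W : Type} (H : SimpleGraph V) (e1 e2 : Sym2 V) (a : V)
    (G : SimpleGraph W) : Prop :=
  (e1 ≠ e2 ∧ ∃ x1 y1 x2 y2 : V, e1 = s(x1, y1) ∧ e2 = s(x2, y2) ∧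
    Nonempty (G ≃g addApex (subdivide (subdivide H x1 y1) (some x2) (some y2))
      {some (some a), some none, none})) ∨
  (e1 = e2 ∧ ∃ x y : V, e1 = s(x, y) ∧
    Nonempty (G ≃g addApex (subdivide (subdivide H x y) none (some y))
      {some (some a), some none, none}))

/-- The cycle of length `n` (for `n ≥ 3`). -/
def cyc (n : ℕ) : SimpleGraph (ZMod n) :=
  SimpleGraph.fromRel (fun u v => v = u + 1)

/-- The families `F_{i,j}` of graphs (closed under isomorphism):
`F_{i,0} = {C_i}` for `i ≥ 3`; `F_{1,1} = {K_4}`; `F_{j,j}` for `j ≥ 2` is obtained from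
`F_{j-1,j-1}` by subdividing one edge once and then applying the `∘` operation at the
subdivision vertex; and `F_{i,j}` for `i > j ≥ 1` is obtained from `F_{j,j}` by `i - j`
successive single-edge subdivisions. -/
inductive MemF : ℕ → ℕ → ∀ {V : Type}, SimpleGraph V → Prop
  | cycle {i : ℕ} (hi : 3 ≤ i) {V : Type} {G : SimpleGraph V}
      (h : Nonempty (G ≃g cyc i)) : MemF i 0 G
  | k4 {V : Type} {G : SimpleGraph V}
      (h : Nonempty (G ≃g (⊤ : SimpleGraph (Fin 4)))) : MemF 1 1 G
  | circ {j : ℕ} (hj : 2 ≤ j) {V : Type} {H : SimpleGraph V}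
      (hH : MemF (j - 1) (j - 1) H) {x y : V} (hxy : H.Adj x y)
      {e1 e2 : Sym2 (Option V)} (he1 : e1 ∈ (subdivide H x y).edgeSet)
      (he2 : e2 ∈ (subdivide H x y).edgeSet)
      {W : Type} {G : SimpleGraph W}
      (hG : IsCircOp (subdivide H x y) e1 e2 none G) : MemF j j G
  | subd {i j : ℕ} (hj : 1 ≤ j) {V : Type} {H : SimpleGraph V}
      (hH : MemF i j H) {x y : V} (hxy : H.Adj x y) {W : Type} {G : SimpleGraph W}
      (hG : Nonempty (G ≃g subdivide H x y)) : MemF (i + 1) j G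

/-- `K_4^+`: the graph obtained from `K_4` by subdividing one edge once. -/
def K4plus : SimpleGraph (Option (Fin 4)) :=
  subdivide (⊤ : SimpleGraph (Fin 4)) 0 1

/-- `L`: the graph obtained from `K_4` by subdividing once each edge
of a perfect matching. -/
def Lgraph : SimpleGraph (Option (Option (Fin 4))) :=
  subdivide (subdivide (⊤ : SimpleGraph (Fin 4)) 0 1) (some 2) (some 3)

/-- The Petersen graph. -/
def petersen : SimpleGraph (ZMod 5 × Fin 2) :=
  SimpleGraph.fromRel (fun u v =>
    (u.2 = 0 ∧ v.2 = 0 ∧ v.1 = u.1 + 1) ∨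
    (u.2 = 1 ∧ v.2 = 1 ∧ v.1 = u.1 + 2) ∨
    (u.2 = 0 ∧ v.2 = 1 ∧ u.1 = v.1))

/-- `R`: the Petersen graph minus one edge. -/
def Rgraph : SimpleGraph (ZMod 5 × Fin 2) :=
  petersen.deleteEdges {s(((0 : ZMod 5), (0 : Fin 2)), ((1 : ZMod 5), (0 : Fin 2)))}

/-- `Q_3`: the 3-dimensional cube graph. -/
def Q3 : SimpleGraph (Fin 2 × Fin 2 × Fin 2) :=
  SimpleGraph.fromRel (fun u v =>
    (u.1 ≠ v.1 ∧ u.2 = v.2) ∨ (u.1 = v.1 ∧ u.2.1 ≠ v.2.1 ∧ u.2.2 = v.2.2) ∨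
    (u.1 = v.1 ∧ u.2.1 = v.2.1 ∧ u.2.2 ≠ v.2.2))

/-- `V_8`: the Wagner graph. -/
def V8 : SimpleGraph (ZMod 8) :=
  SimpleGraph.fromRel (fun u v => v = u + 1 ∨ v = u + 4)

/-- The dodecahedron, presented as the generalized Petersen graph `GP(10,2)`. -/
def dodecahedron : SimpleGraph (ZMod 10 × Fin 2) :=
  SimpleGraph.fromRel (fun u v =>
    (u.2 = 0 ∧ v.2 = 0 ∧ v.1 = u.1 + 1) ∨
    (u.2 = 1 ∧ v.2 = 1 ∧ v.1 = u.1 + 2) ∨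
    (u.2 = 0 ∧ v.2 = 1 ∧ u.1 = v.1))

/-- The families `F^g_{i,j,k}`: 2-connected subcubic graphs obtained from the disjoint
union of `k` copies of `L` (when `g = 4`) or of `R` (when `g = 5`) and one member of
`F_{i,j}` by adding `k+1` edges; when `k ≥ 1`, each added edge joins two different
constituent copies. -/
def MemFG (g i j k : ℕ) {W : Type} (G : SimpleGraph W) : Prop :=
  TwoConnected G ∧ Subcubic G ∧
  ∃ (P : W → Fin (k + 1)) (H : SimpleGraph W),
    H ≤ G ∧ (∀ u v, H.Adj u v → P u = P v) ∧
    MemF i j (H.induce (P ⁻¹' {0})) ∧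
    ((g = 4 ∧ ∀ l : Fin (k + 1), l ≠ 0 → Nonempty ((H.induce (P ⁻¹' {l})) ≃g Lgraph)) ∨
     (g = 5 ∧ ∀ l : Fin (k + 1), l ≠ 0 → Nonempty ((H.induce (P ⁻¹' {l})) ≃g Rgraph))) ∧
    (G.edgeSet \ H.edgeSet).ncard = k + 1 ∧
    (1 ≤ k → ∀ u v, G.Adj u v → ¬ H.Adj u v → P u ≠ P v)

/-- `t_4 = 2/9`, `t_5 = 1/5`. -/
noncomputable def tg (g : ℕ) : ℝ := if g = 4 then 2 / 9 else 1 / 5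

/-- The error function `ε_g` on graphs. -/
noncomputable def eps (g : ℕ) {V : Type} (G : SimpleGraph V) : ℝ := by
  classical
  exact
    if h1 : ∃ p : ℕ × ℕ, 1 ≤ p.1 ∧ p.2 ≤ p.1 ∧ MemF p.1 p.2 G then
      max (1 - (h1.choose.2 : ℝ) * (5 * tg g - 1) - (h1.choose.1 : ℝ) * tg g) 0
    else if h2 : ∃ q : ℕ × ℕ × ℕ, 1 ≤ q.1 ∧ q.2.1 ≤ q.1 ∧ MemFG g q.1 q.2.1 q.2.2 G then
      max (1 - tg g - (h2.choose.2.1 : ℝ) * (5 * tg g - 1) - (h2.choose.1 : ℝ) * tg g) 0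
    else if Nonempty (G ≃g (⊤ : SimpleGraph (Fin 2))) then -tg g
    else 0

/-- The error function `r_g(G)`: the sum of `ε_g(B)` over all blocks `B` of `G`. -/
noncomputable def rg (g : ℕ) {V : Type} (G : SimpleGraph V) : ℝ :=
  ∑ᶠ B ∈ {B : Set V | IsBlock G B}, eps g (G.induce B)

/-- `G` has two vertex-disjoint cycles, each of length less than `g`. -/
def TwoDisjointCyclesLt {V : Type} (G : SimpleGraph V) (g : ℕ) : Prop :=
  ∃ (u v : V) (c1 : G.Walk u u) (c2 : G.Walk v v), c1.IsCycle ∧ c2.IsCycle ∧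
    c1.length < g ∧ c2.length < g ∧ ∀ x, x ∈ c1.support → x ∉ c2.support

/-- `G` contains a (not necessarily induced) subgraph isomorphic to `K`. -/
def ContainsSubgraphCopy {U V : Type} (K : SimpleGraph U) (G : SimpleGraph V) : Prop :=
  ∃ f : U → V, Function.Injective f ∧ ∀ u v, K.Adj u v → G.Adj (f u) (f v)

/-- `G` is obtained from `H` by adding edges, each of which is a cut-edge of `G`. -/
def AddCutEdges {V : Type} (H G : SimpleGraph V) : Prop :=
  H ≤ G ∧ ∀ e ∈ G.edgeSet \ H.edgeSet, G.IsBridge e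

/-- The edges of `H` all lie inside the parts of the partition given by `P`. -/
def PartitionedBy {V ι : Type} (H : SimpleGraph V) (P : V → ι) : Prop :=
  ∀ u v, H.Adj u v → P u = P v

/-- `G` is `g`-minimal: a minimum counterexample to the main theorem. -/
def GMinimal (g : ℕ) {V : Type} [Fintype V] (G : SimpleGraph V) : Prop :=
  Subcubic G ∧ ¬ TwoDisjointCyclesLt G g ∧
  tg g * G.edgeSet.ncard + rg g G < (fvs G : ℝ) ∧
  ∀ (W : Type) [Fintype W] (H : SimpleGraph W), Nat.card W < Nat.card V →
    Subcubic H → ¬ TwoDisjointCyclesLt H g →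
    (fvs H : ℝ) ≤ tg g * H.edgeSet.ncard + rg g H


/-- delete all edges incident to `S` (spanning version of induce `Sᶜ`). -/
def cut {V : Type} (G : SimpleGraph V) (S : Set V) : SimpleGraph V :=
  SimpleGraph.fromRel (fun u v => G.Adj u v ∧ u ∉ S ∧ v ∉ S)

lemma cut_adj {V : Type} (G : SimpleGraph V) (S : Set V) (u v : V) :
    (cut G S).Adj u v ↔ G.Adj u v ∧ u ∉ S ∧ v ∉ S := by
  simp only [cut, fromRel_adj]
  constructor
  · rintro ⟨h, (⟨h1, h2, h3⟩ | ⟨h1, h2, h3⟩)⟩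
    · exact ⟨h1, h2, h3⟩
    · exact ⟨h1.symm, h3, h2⟩
  · rintro ⟨h1, h2, h3⟩
    exact ⟨h1.ne, Or.inl ⟨h1, h2, h3⟩⟩

lemma mem_support_exists_adj {V : Type} {G : SimpleGraph V} {a b v : V} (p : G.Walk a b)
    (hv : v ∈ p.support) : v = b ∨ ∃ w, G.Adj v w := by
  induction p with
  | nil => simp at hv; exact Or.inl hv
  | cons h q ih =>
    rw [SimpleGraph.Walk.support_cons, List.mem_cons] at hv
    rcases hv with rfl | hv
    · exact Or.inr ⟨_, h⟩
    · exact ih hv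

lemma cycle_support_exists_adj {V : Type} {G : SimpleGraph V} {u v : V} {c : G.Walk u u}
    (hc : c.IsCycle) (hv : v ∈ c.support) : ∃ w, G.Adj v w := by
  rcases mem_support_exists_adj c hv with rfl | h
  · cases c with
    | nil => exact absurd rfl hc.ne_nil
    | cons h q => exact ⟨_, h⟩
  · exact h

/-- transfer acyclicity along a hom injective on non-isolated vertices. -/
lemma acyclic_transfer {V W : Type} {A : SimpleGraph V} {B : SimpleGraph W} (f : V → W)
    (hhom : ∀ u v, A.Adj u v → B.Adj (f u) (f v))
    (hinj : Set.InjOn f {v | ∃ w, A.Adj v w})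
    (hB : B.IsAcyclic) : A.IsAcyclic := by
  intro v c hc
  have hsupp : ∀ z ∈ c.support, ∃ w, A.Adj z w := fun z hz => cycle_support_exists_adj hc hz
  refine hB ((c.map ⟨f, fun h => hhom _ _ h⟩) : B.Walk (f v) (f v)) ?_
  constructor
  · constructor
    · constructor
      rw [SimpleGraph.Walk.edges_map]
      refine List.Nodup.map_on ?_ hc.edges_nodup
      intro e1 he1 e2 he2 heq
      induction e1 with
      | _ a b =>
        induction e2 with
        | _ a' b' =>
          simp only [Sym2.map_pair_eq, Sym2.eq_iff] at heq ⊢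
          have ha : a ∈ c.support := c.fst_mem_support_of_mem_edges he1
          have hb : b ∈ c.support := c.snd_mem_support_of_mem_edges he1
          have ha' : a' ∈ c.support := c.fst_mem_support_of_mem_edges he2
          have hb' : b' ∈ c.support := c.snd_mem_support_of_mem_edges he2
          rcases heq with ⟨h1, h2⟩ | ⟨h1, h2⟩
          · exact Or.inl ⟨hinj (hsupp _ ha) (hsupp _ ha') h1, hinj (hsupp _ hb) (hsupp _ hb') h2⟩
          · exact Or.inr ⟨hinj (hsupp _ ha) (hsupp _ hb') h1, hinj (hsupp _ hb) (hsupp _ ha') h2⟩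
    · intro h
      apply hc.ne_nil
      cases c <;> simp_all [SimpleGraph.Walk.map]
  · have : (c.map ⟨f, fun h => hhom _ _ h⟩).support = c.support.map f := SimpleGraph.Walk.support_map _ _
    have htail : (c.map ⟨f, fun h => hhom _ _ h⟩).support.tail = c.support.tail.map f := by
      rw [this]
      cases hs : c.support with
      | nil => simp
      | cons a l => simp
    rw [htail]
    refine List.Nodup.map_on ?_ hc.support_nodup
    intro z hz z' hz' heq
    exact hinj (hsupp _ (List.mem_of_mem_tail hz)) (hsupp _ (List.mem_of_mem_tail hz')) heq



/-- suppression target graph: remove b's edges, add edge pq if b was adjacent to both. -/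
def supp {V : Type} (A : SimpleGraph V) (b p q : V) : SimpleGraph V :=
  SimpleGraph.fromRel (fun u v =>
    (A.Adj u v ∧ u ≠ b ∧ v ≠ b) ∨ (s(u, v) = s(p, q) ∧ A.Adj b p ∧ A.Adj b q))

lemma suppress {V : Type} {A : SimpleGraph V} {b p q : V}
    (hb : ∀ z, A.Adj b z → z = p ∨ z = q)
    (hpq : ¬ A.Adj p q)
    (hA : (supp A b p q).IsAcyclic) : A.IsAcyclic := by
  classical
  intro v c hc
  by_cases hbs : b ∈ c.support
  case neg =>
    -- transfer the cycle into supp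
    have hedges : ∀ e ∈ c.edges, e ∈ (supp A b p q).edgeSet := by
      intro e he
      induction e with
      | _ a z =>
        have ha : a ∈ c.support := c.fst_mem_support_of_mem_edges he
        have hz : z ∈ c.support := c.snd_mem_support_of_mem_edges he
        have hadj : A.Adj a z := c.edges_subset_edgeSet he
        rw [SimpleGraph.mem_edgeSet]
        simp only [supp, fromRel_adj]
        exact ⟨hadj.ne, Or.inl (Or.inl ⟨hadj, fun h => hbs (h ▸ ha), fun h => hbs (h ▸ hz)⟩)⟩
    refine hA (c.transfer _ hedges) ?_
    constructor
    · constructor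
      · constructor
        rw [SimpleGraph.Walk.edges_transfer]
        exact hc.edges_nodup
      · intro h
        apply hc.ne_nil
        cases c <;> simp_all [SimpleGraph.Walk.transfer] <;> exact SimpleGraph.Walk.not_nil_cons h
    · rw [SimpleGraph.Walk.support_transfer]
      exact hc.support_nodup
  case pos =>
    set c' := c.rotate _ hbs with hc'def
    have hc' : c'.IsCycle := hc.rotate hbs
    clear_value c'
    clear hc hbs hc'def
    cases c' with
    | nil => exact absurd rfl hc'.ne_nil
    | cons hadj d =>
      rename_i s1
      -- d : A.Walk s1 b
      rcases hrev : d.reverse with _ | ⟨h2, E⟩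
      · -- d.reverse nil : b = s1, contradiction with hadj : A.Adj b s1
        have : d = Walk.nil.reverse := by rw [← hrev]; simp
        simp at this
        exact hadj.ne rfl
      · rename_i s2
        -- h2 : A.Adj b s2, E : A.Walk s2 s1
        have hdsup : d.support.Nodup := by
          have := hc'.support_nodup
          rwa [SimpleGraph.Walk.support_cons, List.tail_cons] at this
        have hdrevsup : d.reverse.support = b :: E.support := by
          rw [hrev, SimpleGraph.Walk.support_cons]
        have hbE : b ∉ E.support := by
          have : d.reverse.support.Nodup := by rwa [SimpleGraph.Walk.support_reverse, List.nodup_reverse]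
          rw [hdrevsup] at this
          exact (List.nodup_cons.mp this).1
        have hdedges : d.edges.Nodup := by
          have := hc'.edges_nodup
          rw [SimpleGraph.Walk.edges_cons] at this
          exact (List.nodup_cons.mp this).2
        have hbs2_mem : s(b, s2) ∈ d.edges := by
          have : d.reverse.edges = s(b, s2) :: E.edges := by rw [hrev, SimpleGraph.Walk.edges_cons]
          have h' : s(b, s2) ∈ d.reverse.edges := by rw [this]; exact List.mem_cons_self
          rwa [SimpleGraph.Walk.edges_reverse, List.mem_reverse] at h'
        have hs1s2 : s1 ≠ s2 := by
          intro h
          subst h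
          have hfirst : s(b, s1) ∉ d.edges := by
            have := hc'.edges_nodup
            rw [SimpleGraph.Walk.edges_cons] at this
            exact (List.nodup_cons.mp this).1
          exact hfirst hbs2_mem
        have hEedges : E.edges.Nodup := by
          have : d.reverse.edges.Nodup := by rwa [SimpleGraph.Walk.edges_reverse, List.nodup_reverse]
          rw [hrev, SimpleGraph.Walk.edges_cons] at this
          exact (List.nodup_cons.mp this).2
        have hEsup : E.support.Nodup := by
          have : d.reverse.support.Nodup := by rwa [SimpleGraph.Walk.support_reverse, List.nodup_reverse]
          rw [hdrevsup] at this
          exact (List.nodup_cons.mp this).2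
        -- {s1, s2} = {p, q}
        have hs1pq : s1 = p ∨ s1 = q := hb s1 hadj
        have hs2pq : s2 = p ∨ s2 = q := hb s2 h2
        have hApAq : A.Adj b p ∧ A.Adj b q := by
          rcases hs1pq with rfl | rfl <;> rcases hs2pq with rfl | rfl
          · exact absurd rfl hs1s2
          · exact ⟨hadj, h2⟩
          · exact ⟨h2, hadj⟩
          · exact absurd rfl hs1s2
        have hs12pq : s(s1, s2) = s(p, q) := by
          rcases hs1pq with rfl | rfl <;> rcases hs2pq with rfl | rfl
          · exact absurd rfl hs1s2
          · rfl
          · exact Sym2.eq_swap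
          · exact absurd rfl hs1s2
        -- build cycle in supp
        have hEb : ∀ z ∈ E.support, z ≠ b := fun z hz h => hbE (h ▸ hz)
        have hEedges' : ∀ e ∈ E.edges, e ∈ (supp A b p q).edgeSet := by
          intro e he
          induction e with
          | _ a z =>
            have ha : a ∈ E.support := E.fst_mem_support_of_mem_edges he
            have hz : z ∈ E.support := E.snd_mem_support_of_mem_edges he
            have hadj' : A.Adj a z := E.edges_subset_edgeSet he
            rw [SimpleGraph.mem_edgeSet]
            simp only [supp, fromRel_adj]
            exact ⟨hadj'.ne, Or.inl (Or.inl ⟨hadj', hEb a ha, hEb z hz⟩)⟩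
        have hnewadj : (supp A b p q).Adj s1 s2 := by
          simp only [supp, fromRel_adj]
          exact ⟨hs1s2, Or.inl (Or.inr ⟨hs12pq, hApAq.1, hApAq.2⟩)⟩
        set E' := E.transfer (supp A b p q) hEedges' with hE'def
        have hnew : (E'.cons hnewadj).IsCycle := by
          constructor
          · constructor
            · constructor
              rw [SimpleGraph.Walk.edges_cons]
              rw [List.nodup_cons]
              constructor
              · rw [hE'def, SimpleGraph.Walk.edges_transfer]
                intro hmem
                have : s(s1, s2) ∈ A.edgeSet := E.edges_subset_edgeSet hmem
                rw [hs12pq, SimpleGraph.mem_edgeSet] at this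
                exact hpq this
              · rw [hE'def, SimpleGraph.Walk.edges_transfer]
                exact hEedges
            · simp
          · rw [SimpleGraph.Walk.support_cons, List.tail_cons, hE'def,
              SimpleGraph.Walk.support_transfer]
            exact hEsup
        exact hA _ hnew



@[simp] lemma subdivide_adj_some_some {V : Type} (H : SimpleGraph V) (x y u v : V) :
    (subdivide H x y).Adj (some u) (some v) ↔ H.Adj u v ∧ s(u, v) ≠ s(x, y) := by
  simp only [subdivide, fromRel_adj]
  constructor
  · rintro ⟨hne, (⟨h1, h2⟩ | ⟨h1, h2⟩)⟩
    · exact ⟨h1, h2⟩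
    · exact ⟨h1.symm, by rwa [Sym2.eq_swap] at h2⟩
  · rintro ⟨h1, h2⟩
    exact ⟨by simpa using h1.ne, Or.inl ⟨h1, h2⟩⟩

@[simp] lemma subdivide_adj_some_none {V : Type} (H : SimpleGraph V) (x y u : V) :
    (subdivide H x y).Adj (some u) none ↔ u = x ∨ u = y := by
  simp only [subdivide, fromRel_adj]
  constructor
  · rintro ⟨hne, (h | h)⟩
    · exact h
    · exact h.elim
  · rintro h
    exact ⟨by simp, Or.inl h⟩

@[simp] lemma subdivide_adj_none_some {V : Type} (H : SimpleGraph V) (x y u : V) :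
    (subdivide H x y).Adj none (some u) ↔ u = x ∨ u = y := by
  rw [adj_comm, subdivide_adj_some_none]

@[simp] lemma subdivide_adj_none_none {V : Type} (H : SimpleGraph V) (x y : V) :
    ¬ (subdivide H x y).Adj none none := by simp [subdivide, fromRel_adj]

@[simp] lemma addApex_adj_some_some {V : Type} (K : SimpleGraph V) (S : Set V) (u v : V) :
    (addApex K S).Adj (some u) (some v) ↔ K.Adj u v := by
  simp only [addApex, fromRel_adj]
  constructor
  · rintro ⟨hne, (h | h)⟩
    · exact h
    · exact h.symm
  · intro h
    exact ⟨by simpa using h.ne, Or.inl h⟩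

@[simp] lemma addApex_adj_some_none {V : Type} (K : SimpleGraph V) (S : Set V) (u : V) :
    (addApex K S).Adj (some u) none ↔ u ∈ S := by
  simp only [addApex, fromRel_adj]
  constructor
  · rintro ⟨hne, (h | h)⟩
    · exact h
    · exact h.elim
  · intro h
    exact ⟨by simp, Or.inl h⟩

@[simp] lemma addApex_adj_none_some {V : Type} (K : SimpleGraph V) (S : Set V) (u : V) :
    (addApex K S).Adj none (some u) ↔ u ∈ S := by
  rw [adj_comm, addApex_adj_some_none]

@[simp] lemma addApex_adj_none_none {V : Type} (K : SimpleGraph V) (S : Set V) :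
    ¬ (addApex K S).Adj none none := by simp [addApex, fromRel_adj]

lemma cyc_adj {n : ℕ} (u v : ZMod n) :
    (cyc n).Adj u v ↔ u ≠ v ∧ (v = u + 1 ∨ u = v + 1) := by
  simp only [cyc, fromRel_adj]

/-- edge classification for subdivide -/
lemma subdivide_edge_cases {V : Type} {H : SimpleGraph V} {x y : V} {e : Sym2 (Option V)}
    (he : e ∈ (subdivide H x y).edgeSet) :
    (∃ u v, e = s(some u, some v) ∧ H.Adj u v ∧ s(u, v) ≠ s(x, y)) ∨
      e = s(some x, none) ∨ e = s(some y, none) := by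
  induction e with
  | _ a b =>
    rw [mem_edgeSet] at he
    match a, b with
    | some u, some v =>
      rw [subdivide_adj_some_some] at he
      exact Or.inl ⟨u, v, rfl, he⟩
    | some u, none =>
      rw [subdivide_adj_some_none] at he
      rcases he with rfl | rfl
      · exact Or.inr (Or.inl rfl)
      · exact Or.inr (Or.inr rfl)
    | none, some u =>
      rw [subdivide_adj_none_some] at he
      rcases he with rfl | rfl
      · exact Or.inr (Or.inl (Sym2.eq_swap))
      · exact Or.inr (Or.inr (Sym2.eq_swap))
    | none, none => exact absurd he (subdivide_adj_none_none H x y)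

lemma addApex_edge_cases {V : Type} {K : SimpleGraph V} {S : Set V} {e : Sym2 (Option V)}
    (he : e ∈ (addApex K S).edgeSet) :
    (∃ u v, e = s(some u, some v) ∧ K.Adj u v) ∨ ∃ u ∈ S, e = s(some u, none) := by
  induction e with
  | _ a b =>
    rw [mem_edgeSet] at he
    match a, b with
    | some u, some v =>
      rw [addApex_adj_some_some] at he
      exact Or.inl ⟨u, v, rfl, he⟩
    | some u, none =>
      rw [addApex_adj_some_none] at he
      exact Or.inr ⟨u, he, rfl⟩
    | none, some u =>
      rw [addApex_adj_none_some] at he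
      exact Or.inr ⟨u, he, Sym2.eq_swap⟩
    | none, none => exact absurd he (addApex_adj_none_none K S)

lemma cyc_edge_cases {n : ℕ} {e : Sym2 (ZMod n)} (he : e ∈ (cyc n).edgeSet) :
    ∃ a : ZMod n, e = s(a, a + 1) := by
  induction e with
  | _ u v =>
    rw [mem_edgeSet, cyc_adj] at he
    rcases he with ⟨hne, (rfl | rfl)⟩
    · exact ⟨u, rfl⟩
    · exact ⟨v, Sym2.eq_swap⟩

/-- the path graph on ℕ -/
def Npath : SimpleGraph ℕ := SimpleGraph.fromRel (fun u v => v = u + 1)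

lemma Npath_adj (u v : ℕ) : Npath.Adj u v ↔ u ≠ v ∧ (v = u + 1 ∨ u = v + 1) := by
  simp only [Npath, fromRel_adj]

lemma Npath_isAcyclic : Npath.IsAcyclic := by
  rw [isAcyclic_iff_forall_adj_isBridge]
  intro v w hvw
  -- wlog w = v + 1
  have key : ∀ n : ℕ, ∀ a b : ℕ, (Npath.deleteEdges {s(n, n+1)}).Walk a b → a ≤ n → b ≤ n := by
    intro n a b p
    induction p with
    | nil => exact fun h => h
    | cons h q ih =>
      intro ha
      rename_i a' c' _
      apply ih
      rw [SimpleGraph.deleteEdges_adj, Npath_adj] at h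
      obtain ⟨⟨hne, hor⟩, hnot⟩ := h
      simp only [Set.mem_singleton_iff] at hnot
      rcases hor with rfl | rfl
      · -- c' = a' + 1
        have : a' ≠ n := by rintro rfl; exact hnot rfl
        omega
      · omega
  rw [isBridge_iff]
  rw [Npath_adj] at hvw
  obtain ⟨hne, hor⟩ := hvw
  rcases hor with rfl | rfl
  · intro hr
    obtain ⟨p⟩ := hr
    exact absurd (key v _ _ p le_rfl) (by omega)
  · intro hr
    obtain ⟨p⟩ := hr
    have hsw : s(w + 1, w) = s(w, w + 1) := Sym2.eq_swap
    rw [hsw] at p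
    exact absurd (key w _ _ p.reverse le_rfl) (by omega)


lemma supp_adj {V : Type} (A : SimpleGraph V) (b p q u v : V) :
    (supp A b p q).Adj u v ↔ u ≠ v ∧
      ((A.Adj u v ∧ u ≠ b ∧ v ≠ b) ∨ (s(u, v) = s(p, q) ∧ A.Adj b p ∧ A.Adj b q)) := by
  simp only [supp, fromRel_adj]
  constructor
  · rintro ⟨hne, (⟨h1, h2, h3⟩ | ⟨h1, h2, h3⟩) | (⟨h1, h2, h3⟩ | ⟨h1, h2, h3⟩)⟩
    · exact ⟨hne, Or.inl ⟨h1, h2, h3⟩⟩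
    · exact ⟨hne, Or.inr ⟨h1, h2, h3⟩⟩
    · exact ⟨hne, Or.inl ⟨h1.symm, h3, h2⟩⟩
    · exact ⟨hne, Or.inr ⟨by rwa [Sym2.eq_swap] at h1, h2, h3⟩⟩
  · rintro ⟨hne, (⟨h1, h2, h3⟩ | ⟨h1, h2, h3⟩)⟩
    · exact ⟨hne, Or.inl (Or.inl ⟨h1, h2, h3⟩)⟩
    · exact ⟨hne, Or.inl (Or.inr ⟨h1, h2, h3⟩)⟩

lemma sym2_some_inj {V : Type} {u v u' v' : V} :
    s(some u, some v) = (s(some u', some v') : Sym2 (Option V)) ↔ s(u, v) = s(u', v') := by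
  rw [Sym2.eq_iff, Sym2.eq_iff]
  simp only [Option.some.injEq]

/-- the inductive FVS property -/
def QQ {V : Type} (G : SimpleGraph V) (n : ℕ) : Prop :=
  ∀ e ∈ G.edgeSet, ∃ S : Set V,
    S.Finite ∧ S.ncard ≤ n ∧ (cut (G.deleteEdges {e}) S).IsAcyclic

lemma sub_Q_inner {V : Type} {K : SimpleGraph V} {x y : V} (hxy : K.Adj x y)
    {e : Sym2 (Option V)} {f : Sym2 V} {S' : Set V}
    (hacyc : (cut (K.deleteEdges {f}) S').IsAcyclic)
    (h1 : ∀ u v, K.Adj u v → s(u, v) ≠ s(x, y) → s(some u, some v) ≠ e → s(u, v) ≠ f)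
    (h2 : s(some x, none) ≠ e → s(some y, none) ≠ e → s(x, y) ≠ f) :
    (cut ((subdivide K x y).deleteEdges {e}) (some '' S')).IsAcyclic := by
  set A := cut ((subdivide K x y).deleteEdges {e}) (some '' S') with hAdef
  have hAadj : ∀ w z, A.Adj w z ↔
      ((subdivide K x y).Adj w z ∧ s(w, z) ≠ e ∧ w ∉ some '' S' ∧ z ∉ some '' S') := by
    intro w z
    rw [hAdef, cut_adj, SimpleGraph.deleteEdges_adj]
    simp only [Set.mem_singleton_iff]
    tauto
  apply suppress (b := (none : Option V)) (p := some x) (q := some y)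
  · intro z hz
    rw [hAadj] at hz
    obtain ⟨hadj, _, _, _⟩ := hz
    match z with
    | none => exact absurd hadj (subdivide_adj_none_none K x y)
    | some u =>
      rw [subdivide_adj_none_some] at hadj
      rcases hadj with rfl | rfl
      · exact Or.inl rfl
      · exact Or.inr rfl
  · intro h
    rw [hAadj] at h
    obtain ⟨hadj, _⟩ := h
    rw [subdivide_adj_some_some] at hadj
    exact hadj.2 rfl
  · -- the suppressed graph is acyclic: transfer into cut (K - f) S'
    apply acyclic_transfer (B := cut (K.deleteEdges {f}) S') (fun o => o.getD x)
    · intro w z hwz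
      rw [supp_adj] at hwz
      obtain ⟨hne, hcase⟩ := hwz
      rcases hcase with ⟨hA, hw, hz⟩ | ⟨heq, hbx, hby⟩
      · match w, z with
        | some u, some v =>
          rw [hAadj] at hA
          obtain ⟨hadj, hnee, hu, hv⟩ := hA
          rw [subdivide_adj_some_some] at hadj
          simp only [Option.getD_some]
          rw [cut_adj, SimpleGraph.deleteEdges_adj]
          refine ⟨⟨hadj.1, ?_⟩, ?_, ?_⟩
          · simp only [Set.mem_singleton_iff]
            exact h1 u v hadj.1 hadj.2 hnee
          · intro h; exact hu ⟨u, h, rfl⟩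
          · intro h; exact hv ⟨v, h, rfl⟩
        | none, _ => exact absurd rfl hw
        | _, none => exact absurd rfl hz
      · rw [hAadj] at hbx hby
        obtain ⟨hadjx, hnex, -, hxS⟩ := hbx
        obtain ⟨hadjy, hney, -, hyS⟩ := hby
        have hxS' : x ∉ S' := fun h => hxS ⟨x, h, rfl⟩
        have hyS' : y ∉ S' := fun h => hyS ⟨y, h, rfl⟩
        have hxyf : s(x, y) ≠ f := by
          apply h2
          · intro h; exact hnex (by rw [← h]; exact Sym2.eq_swap)
          · intro h; exact hney (by rw [← h]; exact Sym2.eq_swap)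
        have hKxy : (cut (K.deleteEdges {f}) S').Adj x y := by
          rw [cut_adj, SimpleGraph.deleteEdges_adj]
          exact ⟨⟨hxy, by simpa using hxyf⟩, hxS', hyS'⟩
        rw [Sym2.eq_iff] at heq
        rcases heq with ⟨rfl, rfl⟩ | ⟨rfl, rfl⟩
        · simpa using hKxy
        · simpa using hKxy.symm
    · intro w hw z hz hgd
      obtain ⟨w', hww⟩ := hw
      obtain ⟨z', hzz⟩ := hz
      have hwn : w ≠ none := by
        rintro rfl
        rw [supp_adj] at hww
        rcases hww.2 with ⟨_, h, _⟩ | ⟨h, _, _⟩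
        · exact h rfl
        · rw [Sym2.eq_iff] at h
          rcases h with ⟨h, _⟩ | ⟨h, _⟩ <;> exact absurd h (by simp)
      have hzn : z ≠ none := by
        rintro rfl
        rw [supp_adj] at hzz
        rcases hzz.2 with ⟨_, h, _⟩ | ⟨h, _, _⟩
        · exact h rfl
        · rw [Sym2.eq_iff] at h
          rcases h with ⟨h, _⟩ | ⟨h, _⟩ <;> exact absurd h (by simp)
      match w, z with
      | some u, some v => simpa using hgd
      | none, _ => exact absurd rfl hwn
      | _, none => exact absurd rfl hzn
    · exact hacyc

lemma sub_Q {V : Type} {K : SimpleGraph V} {x y : V} {n : ℕ} (hxy : K.Adj x y)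
    (hQ : QQ K n) : QQ (subdivide K x y) n := by
  intro e he
  rcases subdivide_edge_cases he with ⟨u, v, rfl, huv, hne⟩ | rfl | rfl
  · obtain ⟨S', hfin, hcard, hacyc⟩ := hQ s(u, v) huv
    refine ⟨some '' S', hfin.image _, ?_, ?_⟩
    · rw [Set.ncard_image_of_injective _ (Option.some_injective V)]; exact hcard
    · apply sub_Q_inner hxy hacyc
      · intro u' v' _ _ hnee heq
        exact hnee (by rw [sym2_some_inj]; exact heq)
      · intro _ _ h
        exact hne h.symm
  · obtain ⟨S', hfin, hcard, hacyc⟩ := hQ s(x, y) hxy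
    refine ⟨some '' S', hfin.image _, ?_, ?_⟩
    · rw [Set.ncard_image_of_injective _ (Option.some_injective V)]; exact hcard
    · apply sub_Q_inner hxy hacyc
      · intro u' v' _ hne' _ heq
        exact hne' heq
      · intro h _
        exact absurd rfl h
  · obtain ⟨S', hfin, hcard, hacyc⟩ := hQ s(x, y) hxy
    refine ⟨some '' S', hfin.image _, ?_, ?_⟩
    · rw [Set.ncard_image_of_injective _ (Option.some_injective V)]; exact hcard
    · apply sub_Q_inner hxy hacyc
      · intro u' v' _ hne' _ heq
        exact hne' heq
      · intro _ h
        exact absurd rfl h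

lemma apex_edge_helper {γ : Type} {K : SimpleGraph γ} {T : Set γ} {t rm keep : γ}
    (hT : T ⊆ {t, rm, keep}) {w0 : γ} (hrm : K.Adj rm w0) {S'' : Set γ}
    (hacyc : (cut (K.deleteEdges {s(rm, w0)}) S'').IsAcyclic) :
    (cut ((addApex K T).deleteEdges {s(some t, none)})
      (insert (some rm) (some '' S''))).IsAcyclic := by
  set A := cut ((addApex K T).deleteEdges {s(some t, none)}) (insert (some rm) (some '' S''))
    with hAdef
  have hAadj : ∀ w z, A.Adj w z ↔
      ((addApex K T).Adj w z ∧ s(w, z) ≠ s(some t, none) ∧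
        w ∉ insert (some rm) (some '' S'') ∧ z ∉ insert (some rm) (some '' S'')) := by
    intro w z
    rw [hAdef, cut_adj, SimpleGraph.deleteEdges_adj]
    simp only [Set.mem_singleton_iff]
    tauto
  apply suppress (b := (none : Option γ)) (p := some keep) (q := some keep)
  · intro z hz
    rw [hAadj] at hz
    obtain ⟨hadj, hne, -, hzS⟩ := hz
    match z with
    | none => exact absurd hadj (addApex_adj_none_none K T)
    | some s =>
      rw [addApex_adj_none_some] at hadj
      have := hT hadj
      simp only [Set.mem_insert_iff, Set.mem_singleton_iff] at this
      rcases this with rfl | rfl | rfl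
      · exfalso; exact hne (Sym2.eq_swap)
      · exfalso; exact hzS (Set.mem_insert _ _)
      · exact Or.inl rfl
  · exact fun h => h.ne rfl
  · apply acyclic_transfer (B := cut (K.deleteEdges {s(rm, w0)}) S'') (fun o => o.getD keep)
    · intro w z hwz
      rw [supp_adj] at hwz
      obtain ⟨hne, hcase⟩ := hwz
      rcases hcase with ⟨hA, hw, hz⟩ | ⟨heq, _, _⟩
      · match w, z with
        | some u, some v =>
          rw [hAadj] at hA
          obtain ⟨hadj, -, hu, hv⟩ := hA
          rw [addApex_adj_some_some] at hadj
          simp only [Set.mem_insert_iff, Option.some.injEq] at hu hv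
          push_neg at hu hv
          simp only [Option.getD_some]
          rw [cut_adj, SimpleGraph.deleteEdges_adj]
          refine ⟨⟨hadj, ?_⟩, ?_, ?_⟩
          · simp only [Set.mem_singleton_iff, Sym2.eq_iff]
            rintro (⟨rfl, rfl⟩ | ⟨rfl, rfl⟩)
            · exact hu.1 rfl
            · exact hv.1 rfl
          · intro h; exact hu.2 ⟨u, h, rfl⟩
          · intro h; exact hv.2 ⟨v, h, rfl⟩
        | none, _ => exact absurd rfl hw
        | _, none => exact absurd rfl hz
      · exfalso
        rw [Sym2.eq_iff] at heq
        rcases heq with ⟨rfl, rfl⟩ | ⟨rfl, rfl⟩ <;> exact hne rfl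
    · intro w hw z hz hgd
      obtain ⟨w', hww⟩ := hw
      obtain ⟨z', hzz⟩ := hz
      have hnon : ∀ a a' : Option γ, (supp A none (some keep) (some keep)).Adj a a' → a ≠ none := by
        intro a a' haa
        rw [supp_adj] at haa
        rintro rfl
        rcases haa.2 with ⟨_, h, _⟩ | ⟨h, _, _⟩
        · exact h rfl
        · rw [Sym2.eq_iff] at h
          rcases h with ⟨h, _⟩ | ⟨h, _⟩ <;> exact absurd h (by simp)
      have hwn := hnon w w' hww
      have hzn := hnon z z' hzz
      match w, z with
      | some u, some v => simpa using hgd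
      | none, _ => exact absurd rfl hwn
      | _, none => exact absurd rfl hzn
    · exact hacyc

lemma apex_Q {γ : Type} {K : SimpleGraph γ} {a b c : γ} {n : ℕ}
    (hb : ∃ w, K.Adj b w) (hc : ∃ w, K.Adj c w) (hQ : QQ K n) :
    QQ (addApex K {a, b, c}) (n + 1) := by
  intro e he
  rcases addApex_edge_cases he with ⟨u, v, rfl, huv⟩ | ⟨t, htT, rfl⟩
  · -- inherited edge: cut out the apex plus IH set
    obtain ⟨S', hfin, hcard, hacyc⟩ := hQ s(u, v) huv
    refine ⟨insert none (some '' S'), (hfin.image _).insert _, ?_, ?_⟩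
    · calc (insert (none : Option γ) (some '' S')).ncard ≤ (some '' S').ncard + 1 :=
            Set.ncard_insert_le _ _
        _ ≤ n + 1 := by
            rw [Set.ncard_image_of_injective _ (Option.some_injective γ)]; omega
    · set A := cut ((addApex K {a, b, c}).deleteEdges {s(some u, some v)})
        (insert none (some '' S')) with hAdef
      have hAadj : ∀ w z, A.Adj w z ↔
          ((addApex K {a, b, c}).Adj w z ∧ s(w, z) ≠ s(some u, some v) ∧
            w ∉ insert none (some '' S') ∧ z ∉ insert none (some '' S')) := by
        intro w z
        rw [hAdef, cut_adj, SimpleGraph.deleteEdges_adj]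
        simp only [Set.mem_singleton_iff]
        tauto
      apply acyclic_transfer (B := cut (K.deleteEdges {s(u, v)}) S') (fun o => o.getD u)
      · intro w z hwz
        rw [hAadj] at hwz
        obtain ⟨hadj, hne, hw, hz⟩ := hwz
        match w, z with
        | some u', some v' =>
          rw [addApex_adj_some_some] at hadj
          simp only [Option.getD_some]
          rw [cut_adj, SimpleGraph.deleteEdges_adj]
          refine ⟨⟨hadj, ?_⟩, ?_, ?_⟩
          · simp only [Set.mem_singleton_iff]
            intro h
            exact hne (by rw [sym2_some_inj]; exact h)
          · intro h; exact hw (Set.mem_insert_iff.mpr (Or.inr ⟨u', h, rfl⟩))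
          · intro h; exact hz (Set.mem_insert_iff.mpr (Or.inr ⟨v', h, rfl⟩))
        | none, _ => exact absurd (Set.mem_insert _ _) hw
        | _, none => exact absurd (Set.mem_insert _ _) hz
      · intro w hw z hz hgd
        obtain ⟨w', hww⟩ := hw
        obtain ⟨z', hzz⟩ := hz
        have hwn : w ≠ none := by
          rintro rfl
          rw [hAadj] at hww
          exact hww.2.2.1 (Set.mem_insert _ _)
        have hzn : z ≠ none := by
          rintro rfl
          rw [hAadj] at hzz
          exact hzz.2.2.1 (Set.mem_insert _ _)
        match w, z with
        | some u', some v' => simpa using hgd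
        | none, _ => exact absurd rfl hwn
        | _, none => exact absurd rfl hzn
      · exact hacyc
  · -- apex edge
    obtain ⟨w0, hbw⟩ := hb
    have hbE : s(b, w0) ∈ K.edgeSet := hbw
    obtain ⟨S'', hfin, hcard, hacyc⟩ := hQ s(b, w0) hbw
    have hcard' : (insert (some b) (some '' S'')).ncard ≤ n + 1 := by
      calc (insert (some b : Option γ) (some '' S'')).ncard ≤ (some '' S'').ncard + 1 :=
            Set.ncard_insert_le _ _
        _ ≤ n + 1 := by
            rw [Set.ncard_image_of_injective _ (Option.some_injective γ)]; omega
    simp only [Set.mem_insert_iff, Set.mem_singleton_iff] at htT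
    rcases htT with ht | ht | ht
    · -- t = a : remove b, keep c
      refine ⟨insert (some b) (some '' S''), (hfin.image _).insert _, hcard', ?_⟩
      apply apex_edge_helper (rm := b) (keep := c) ?_ hbw hacyc
      intro s hs
      simp only [Set.mem_insert_iff, Set.mem_singleton_iff] at hs ⊢
      rcases hs with rfl | rfl | rfl
      · exact Or.inl ht.symm
      · exact Or.inr (Or.inl rfl)
      · exact Or.inr (Or.inr rfl)
    · -- t = b : remove c, keep a
      obtain ⟨wc, hcw⟩ := hc
      obtain ⟨Sc, hcfin, hccard, hcacyc⟩ := hQ s(c, wc) hcw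
      have hccard' : (insert (some c) (some '' Sc)).ncard ≤ n + 1 := by
        calc (insert (some c : Option γ) (some '' Sc)).ncard ≤ (some '' Sc).ncard + 1 :=
              Set.ncard_insert_le _ _
          _ ≤ n + 1 := by
              rw [Set.ncard_image_of_injective _ (Option.some_injective γ)]; omega
      refine ⟨insert (some c) (some '' Sc), (hcfin.image _).insert _, hccard', ?_⟩
      apply apex_edge_helper (rm := c) (keep := a) ?_ hcw hcacyc
      intro s hs
      simp only [Set.mem_insert_iff, Set.mem_singleton_iff] at hs ⊢
      rcases hs with rfl | rfl | rfl
      · exact Or.inr (Or.inr rfl)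
      · exact Or.inl ht.symm
      · exact Or.inr (Or.inl rfl)
    · -- t = c : remove b, keep a
      refine ⟨insert (some b) (some '' S''), (hfin.image _).insert _, hcard', ?_⟩
      apply apex_edge_helper (rm := b) (keep := a) ?_ hbw hacyc
      intro s hs
      simp only [Set.mem_insert_iff, Set.mem_singleton_iff] at hs ⊢
      rcases hs with rfl | rfl | rfl
      · exact Or.inr (Or.inr rfl)
      · exact Or.inr (Or.inl rfl)
      · exact Or.inl ht.symm

lemma iso_Q {V W : Type} {G : SimpleGraph V} {G' : SimpleGraph W} (φ : G ≃g G') {n : ℕ}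
    (hQ : QQ G' n) : QQ G n := by
  intro e he
  induction e with
  | _ u v =>
    rw [mem_edgeSet] at he
    have he' : s(φ u, φ v) ∈ G'.edgeSet := by
      rw [mem_edgeSet]
      exact φ.map_adj_iff.mpr he
    obtain ⟨S', hfin, hcard, hacyc⟩ := hQ _ he'
    refine ⟨φ.symm '' S', hfin.image _, ?_, ?_⟩
    · rw [Set.ncard_image_of_injective _ (φ.symm.injective : Function.Injective ⇑φ.symm)]
      exact hcard
    · apply acyclic_transfer (B := cut (G'.deleteEdges {s(φ u, φ v)}) S') (⇑φ)
      · intro a b hab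
        rw [cut_adj, SimpleGraph.deleteEdges_adj] at hab ⊢
        obtain ⟨⟨hadj, hnee⟩, haS, hbS⟩ := hab
        simp only [Set.mem_singleton_iff] at hnee ⊢
        refine ⟨⟨φ.map_adj_iff.mpr hadj, ?_⟩, ?_, ?_⟩
        · intro h
          apply hnee
          rw [Sym2.eq_iff] at h ⊢
          rcases h with ⟨h1, h2⟩ | ⟨h1, h2⟩
          · exact Or.inl ⟨φ.injective h1, φ.injective h2⟩
          · exact Or.inr ⟨φ.injective h1, φ.injective h2⟩
        · intro h
          exact haS ⟨φ a, h, by simp⟩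
        · intro h
          exact hbS ⟨φ b, h, by simp⟩
      · exact fun _ _ _ _ h => φ.injective h
      · exact hacyc

lemma FVS_of_cut {V : Type} {G : SimpleGraph V} {S : Set V}
    (h : (cut G S).IsAcyclic) : IsFVS G S := by
  apply acyclic_transfer (B := cut G S) (Subtype.val)
  · intro u v huv
    rw [cut_adj]
    simp only [comap_adj, Function.Embedding.coe_subtype] at huv
    exact ⟨huv, u.2, v.2⟩
  · exact fun a _ b _ hab => Subtype.ext hab
  · exact h

lemma fvs_le_of_cut {V : Type} {G : SimpleGraph V} {S : Set V}
    (h : (cut G S).IsAcyclic) : fvs G ≤ S.ncard :=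
  Nat.sInf_le ⟨S, FVS_of_cut h, rfl⟩

lemma cyc_Q {n : ℕ} (hn : 3 ≤ n) : QQ (cyc n) 0 := by
  haveI : NeZero n := ⟨by omega⟩
  intro e he
  obtain ⟨a, rfl⟩ := cyc_edge_cases he
  refine ⟨∅, Set.finite_empty, by simp, ?_⟩
  apply acyclic_transfer (B := Npath) (fun u => (u - (a + 1)).val)
  · intro u v huv
    rw [cut_adj, SimpleGraph.deleteEdges_adj] at huv
    obtain ⟨⟨hadj, hnee⟩, -, -⟩ := huv
    rw [cyc_adj] at hadj
    simp only [Set.mem_singleton_iff] at hnee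
    obtain ⟨hne, hor⟩ := hadj
    have key : ∀ w z : ZMod n, w ≠ z → z = w + 1 → s(w, z) ≠ s(a, a + 1) →
        Npath.Adj ((w - (a+1)).val) ((z - (a+1)).val) := by
      intro w z hwz hz hsne
      subst hz
      have hwa : w ≠ a := by
        rintro rfl
        exact hsne rfl
      have hwa1 : w - a ≠ 0 := fun h => hwa (by rwa [sub_eq_zero] at h)
      have hval : (w - a).val ≠ 0 := by
        intro h
        exact hwa1 (by rwa [ZMod.val_eq_zero] at h)
      have h1 : w + 1 - (a + 1) = w - a := by ring
      have h2 : w - (a + 1) = (w - a) - 1 := by ring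
      rw [Npath_adj, h1, h2]
      have hlt : (w - a).val < n := ZMod.val_lt _
      have h3 : (((w - a).val - 1 : ℕ) : ZMod n) = (w - a) - 1 := by
        rw [Nat.cast_sub (by omega : 1 ≤ (w - a).val), Nat.cast_one, ZMod.natCast_zmod_val]
      have hsub : ((w - a) - 1).val = (w - a).val - 1 := by
        rw [← h3, ZMod.val_cast_of_lt (by omega)]
      rw [hsub]
      constructor
      · omega
      · exact Or.inl (by omega)
    rcases hor with hz | hz
    · exact key u v hne hz hnee
    · exact (key v u (Ne.symm hne) hz (by rwa [Sym2.eq_swap])).symm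
  · intro u _ v _ h
    have h2 : u - (a+1) = v - (a+1) := ZMod.val_injective n h
    exact sub_left_inj.mp h2
  · exact Npath_isAcyclic

lemma fin4_helper : ∀ u v : Fin 4, u ≠ v → ∃ cc dd : Fin 4,
    u ≠ cc ∧ u ≠ dd ∧ v ≠ cc ∧ v ≠ dd ∧ cc ≠ dd ∧
    ∀ z : Fin 4, z = u ∨ z = v ∨ z = cc ∨ z = dd := by decide

lemma k4_Q : QQ (⊤ : SimpleGraph (Fin 4)) 1 := by
  intro e he
  induction e with
  | _ u v =>
    rw [mem_edgeSet, top_adj] at he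
    obtain ⟨cc, dd, huc, hud, hvc, hvd, hcd, hall⟩ := fin4_helper u v he
    refine ⟨{cc}, Set.finite_singleton _, by simp, ?_⟩
    set f : Fin 4 → ℕ := fun z => if z = u then 0 else if z = dd then 1 else if z = v then 2 else 3
      with hfdef
    have fu : f u = 0 := by simp [hfdef]
    have fdd : f dd = 1 := by simp [hfdef, Ne.symm hud]
    have fv : f v = 2 := by simp [hfdef, Ne.symm he, hvd]
    have fcc : f cc = 3 := by simp [hfdef, Ne.symm huc, Ne.symm hvc, hcd]
    apply acyclic_transfer (B := Npath) f
    · intro a b hab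
      rw [cut_adj, SimpleGraph.deleteEdges_adj] at hab
      obtain ⟨⟨hadj, hnee⟩, haS, hbS⟩ := hab
      rw [top_adj] at hadj
      simp only [Set.mem_singleton_iff] at hnee haS hbS
      have hsym : ∀ z w : Fin 4, z = w → ¬ (s(z, w) : Sym2 (Fin 4)) = s(u, v) → True := fun _ _ _ _ => trivial
      rcases hall a with rfl | rfl | rfl | rfl <;> rcases hall b with rfl | rfl | rfl | rfl <;>
        first
          | exact absurd rfl hadj
          | exact absurd rfl haS
          | exact absurd rfl hbS
          | exact absurd rfl hnee
          | (exfalso; exact hnee Sym2.eq_swap)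
          | (rw [fu, fdd, Npath_adj]; omega)
          | (rw [fdd, fu, Npath_adj]; omega)
          | (rw [fv, fdd, Npath_adj]; omega)
          | (rw [fdd, fv, Npath_adj]; omega)
    · intro a _ b _ hab
      rcases hall a with rfl | rfl | rfl | rfl <;> rcases hall b with rfl | rfl | rfl | rfl <;>
        first | rfl | (simp only [fu, fdd, fv, fcc] at hab <;> omega)
    · exact Npath_isAcyclic

lemma sub_edgeSet_eq {V : Type} {K : SimpleGraph V} {x y : V} (hxy : K.Adj x y) :
    (subdivide K x y).edgeSet =
      (Sym2.map some) '' (K.edgeSet \ {s(x, y)}) ∪ {s(some x, none), s(some y, none)} := by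
  ext e
  constructor
  · intro he
    rcases subdivide_edge_cases he with ⟨u, v, rfl, huv, hne⟩ | rfl | rfl
    · exact Or.inl ⟨s(u, v), ⟨huv, hne⟩, by rw [Sym2.map_pair_eq]⟩
    · exact Or.inr (Or.inl rfl)
    · exact Or.inr (Or.inr rfl)
  · rintro (⟨f, ⟨hf, hfne⟩, rfl⟩ | (rfl | rfl))
    · induction f with
      | _ u v =>
        rw [Sym2.map_pair_eq, mem_edgeSet, subdivide_adj_some_some]
        exact ⟨hf, hfne⟩
    · rw [mem_edgeSet, subdivide_adj_some_none]; exact Or.inl rfl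
    · rw [mem_edgeSet, subdivide_adj_some_none]; exact Or.inr rfl

lemma edge_count_sub {V : Type} {K : SimpleGraph V} {x y : V} (hxy : K.Adj x y)
    (hfin : K.edgeSet.Finite) :
    (subdivide K x y).edgeSet.Finite ∧
      (subdivide K x y).edgeSet.ncard = K.edgeSet.ncard + 1 := by
  have hinj : Function.Injective (Sym2.map (some : V → Option V)) :=
    Sym2.map.injective (Option.some_injective V)
  rw [sub_edgeSet_eq hxy]
  have hfin1 : ((Sym2.map some) '' (K.edgeSet \ {s(x, y)})).Finite :=
    (hfin.diff).image _
  have hfin2 : ({s(some x, none), s(some y, none)} : Set (Sym2 (Option V))).Finite := by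
    exact (Set.finite_singleton _).insert _
  have hdisj : Disjoint ((Sym2.map some) '' (K.edgeSet \ {s(x, y)}))
      {s(some x, none), s(some y, none)} := by
    rw [Set.disjoint_left]
    rintro e ⟨f, hf, rfl⟩ hmem
    induction f with
    | _ u v =>
      rw [Sym2.map_pair_eq] at hmem
      simp only [Set.mem_insert_iff, Set.mem_singleton_iff, Sym2.eq_iff] at hmem
      rcases hmem with (⟨_, h⟩ | ⟨h, _⟩) | (⟨_, h⟩ | ⟨h, _⟩) <;> exact absurd h (by simp)
  constructor
  · exact hfin1.union hfin2
  · rw [Set.ncard_union_eq hdisj hfin1 hfin2,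
      Set.ncard_image_of_injective _ hinj,
      Set.ncard_diff_singleton_of_mem ((mem_edgeSet K).mpr hxy),
      Set.ncard_pair (by
        intro h
        rw [Sym2.eq_iff] at h
        rcases h with ⟨h, _⟩ | ⟨_, h⟩
        · exact hxy.ne (Option.some_injective V h)
        · exact absurd h (by simp))]
    have hpos : 0 < K.edgeSet.ncard := by
      rw [Set.ncard_pos hfin]
      exact ⟨_, (mem_edgeSet K).mpr hxy⟩
    omega

lemma apex_edgeSet_eq {V : Type} {K : SimpleGraph V} {T : Set V} :
    (addApex K T).edgeSet = (Sym2.map some) '' K.edgeSet ∪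
      ((fun u => s(some u, none)) '' T) := by
  ext e
  constructor
  · intro he
    rcases addApex_edge_cases he with ⟨u, v, rfl, huv⟩ | ⟨u, hu, rfl⟩
    · exact Or.inl ⟨s(u, v), huv, by rw [Sym2.map_pair_eq]⟩
    · exact Or.inr ⟨u, hu, rfl⟩
  · rintro (⟨f, hf, rfl⟩ | ⟨u, hu, rfl⟩)
    · induction f with
      | _ u v =>
        rw [Sym2.map_pair_eq, mem_edgeSet, addApex_adj_some_some]
        exact hf
    · rw [mem_edgeSet, addApex_adj_some_none]; exact hu

lemma edge_count_apex {V : Type} {K : SimpleGraph V} {T : Set V} (hfinT : T.Finite)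
    (hfin : K.edgeSet.Finite) :
    (addApex K T).edgeSet.Finite ∧
      (addApex K T).edgeSet.ncard = K.edgeSet.ncard + T.ncard := by
  have hinj : Function.Injective (Sym2.map (some : V → Option V)) :=
    Sym2.map.injective (Option.some_injective V)
  have hinj2 : Function.Injective (fun u : V => (s(some u, none) : Sym2 (Option V))) := by
    intro u v h
    simp only [Sym2.eq_iff] at h
    rcases h with ⟨h, _⟩ | ⟨_, h⟩
    · exact Option.some_injective V h
    · exact absurd h.symm (by simp)
  rw [apex_edgeSet_eq]
  have hfin1 := hfin.image (Sym2.map some)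
  have hfin2 := hfinT.image (fun u => (s(some u, none) : Sym2 (Option V)))
  have hdisj : Disjoint ((Sym2.map some) '' K.edgeSet)
      ((fun u => s(some u, none)) '' T) := by
    rw [Set.disjoint_left]
    rintro e ⟨f, hf, rfl⟩ ⟨u, hu, heq⟩
    induction f with
    | _ a b =>
      rw [Sym2.map_pair_eq] at heq
      simp only [Sym2.eq_iff] at heq
      rcases heq with ⟨h1, h2⟩ | ⟨h1, h2⟩ <;> simp_all
  exact ⟨hfin1.union hfin2, by
    rw [Set.ncard_union_eq hdisj hfin1 hfin2, Set.ncard_image_of_injective _ hinj,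
      Set.ncard_image_of_injective _ hinj2]⟩

lemma cyc_edgeSet_eq {n : ℕ} (hn : 3 ≤ n) :
    (cyc n).edgeSet = (fun a : ZMod n => s(a, a + 1)) '' Set.univ := by
  haveI : NeZero n := ⟨by omega⟩
  ext e
  constructor
  · intro he
    obtain ⟨a, rfl⟩ := cyc_edge_cases he
    exact ⟨a, trivial, rfl⟩
  · rintro ⟨a, -, rfl⟩
    rw [mem_edgeSet, cyc_adj]
    have h1 : (1 : ZMod n) ≠ 0 := by
      intro h
      have hd := (ZMod.natCast_eq_zero_iff 1 n).mp (by exact_mod_cast h)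
      have := Nat.le_of_dvd one_pos hd
      omega
    exact ⟨by
      intro h
      exact h1 (by linear_combination -h), Or.inl rfl⟩

lemma edge_count_cyc {n : ℕ} (hn : 3 ≤ n) :
    (cyc n).edgeSet.Finite ∧ (cyc n).edgeSet.ncard = n := by
  haveI : NeZero n := ⟨by omega⟩
  have h2 : (2 : ZMod n) ≠ 0 := by
    intro h
    have hd := (ZMod.natCast_eq_zero_iff 2 n).mp (by exact_mod_cast h)
    have := Nat.le_of_dvd two_pos hd
    omega
  have hinj : Function.Injective (fun a : ZMod n => (s(a, a + 1) : Sym2 (ZMod n))) := by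
    intro a b h
    simp only [Sym2.eq_iff] at h
    rcases h with ⟨h, _⟩ | ⟨h1, h2'⟩
    · exact h
    · exfalso
      apply h2
      linear_combination h2' - h1
  rw [cyc_edgeSet_eq hn]
  constructor
  · exact Set.finite_univ.image _
  · rw [Set.ncard_image_of_injective _ hinj, Set.ncard_univ, Nat.card_eq_fintype_card,
      ZMod.card]

lemma edge_count_iso {V W : Type} {G : SimpleGraph V} {G' : SimpleGraph W} (φ : G ≃g G')
    (hfin : G'.edgeSet.Finite) :
    G.edgeSet.Finite ∧ G.edgeSet.ncard = G'.edgeSet.ncard := by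
  have heq : G.edgeSet = (Sym2.map ⇑φ.symm) '' G'.edgeSet := by
    ext e
    constructor
    · intro he
      induction e with
      | _ u v =>
        rw [mem_edgeSet] at he
        refine ⟨s(φ u, φ v), φ.map_adj_iff.mpr he, ?_⟩
        rw [Sym2.map_pair_eq]
        simp
    · rintro ⟨f, hf, rfl⟩
      induction f with
      | _ u v =>
        rw [mem_edgeSet] at hf
        rw [Sym2.map_pair_eq, mem_edgeSet]
        exact φ.symm.map_adj_iff.mpr hf
  rw [heq]
  exact ⟨hfin.image _, Set.ncard_image_of_injective _
    (Sym2.map.injective φ.symm.injective)⟩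

lemma edge_count_k4 :
    (⊤ : SimpleGraph (Fin 4)).edgeSet.Finite ∧ (⊤ : SimpleGraph (Fin 4)).edgeSet.ncard = 6 := by
  constructor
  · exact Set.toFinite _
  · rw [Set.ncard_eq_toFinset_card']
    decide

lemma ncard_apex_set {α : Type} :
    ({some (some none), some none, none} : Set (Option (Option (Option α)))).ncard = 3 := by
  rw [Set.ncard_insert_of_notMem (by simp), Set.ncard_insert_of_notMem (by simp),
    Set.ncard_singleton]

lemma main_ind {i j : ℕ} {V : Type} {G : SimpleGraph V} (h : MemF i j G) :
    (G.edgeSet.Finite ∧ G.edgeSet.ncard = i + 5 * j) ∧ QQ G j := by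
  induction h with
  | cycle hi h =>
    obtain ⟨φ⟩ := h
    obtain ⟨hfin, hcard⟩ := edge_count_cyc hi
    obtain ⟨hfin', hcard'⟩ := edge_count_iso φ hfin
    exact ⟨⟨hfin', by omega⟩, iso_Q φ (cyc_Q hi)⟩
  | k4 h =>
    obtain ⟨φ⟩ := h
    obtain ⟨hfin', hcard'⟩ := edge_count_iso φ edge_count_k4.1
    refine ⟨⟨hfin', ?_⟩, iso_Q φ k4_Q⟩
    rw [hcard', edge_count_k4.2]
  | circ hj hH hxy he1 he2 hG ih =>
    obtain ⟨⟨hfinH, hcardH⟩, hQH⟩ := ih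
    rename_i j V H x y e1 e2 W G
    have hQ1 : QQ (subdivide H x y) (j - 1) := sub_Q hxy hQH
    obtain ⟨hfin1, hcard1⟩ := edge_count_sub hxy hfinH
    rcases hG with ⟨hne, x1, y1, x2, y2, he1eq, he2eq, ⟨φ⟩⟩ | ⟨heq, x', y', he1eq, ⟨φ⟩⟩
    · -- two distinct subdivided edges
      subst he1eq
      subst he2eq
      have hadj1 : (subdivide H x y).Adj x1 y1 := (SimpleGraph.mem_edgeSet _).mp he1
      have hadj2 : (subdivide (subdivide H x y) x1 y1).Adj (some x2) (some y2) := by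
        rw [subdivide_adj_some_some]
        exact ⟨(SimpleGraph.mem_edgeSet _).mp he2, fun hcontra => hne hcontra.symm⟩
      have hQ2 := sub_Q hadj1 hQ1
      have hQ3 := sub_Q hadj2 hQ2
      have hbnon : ∃ w, (subdivide (subdivide (subdivide H x y) x1 y1)
          (some x2) (some y2)).Adj (some none) w := by
        refine ⟨some (some x1), ?_⟩
        rw [subdivide_adj_some_some]
        constructor
        · rw [subdivide_adj_none_some]
          exact Or.inl rfl
        · intro hcontra
          rw [Sym2.eq_iff] at hcontra
          rcases hcontra with ⟨h1, h2⟩ | ⟨h1, h2⟩ <;> exact absurd h1 (by simp)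
      have hcnon : ∃ w, (subdivide (subdivide (subdivide H x y) x1 y1)
          (some x2) (some y2)).Adj none w := by
        refine ⟨some (some x2), ?_⟩
        rw [subdivide_adj_none_some]
        exact Or.inl rfl
      have hQ4 := apex_Q (a := some (some none)) hbnon hcnon hQ3
      obtain ⟨hfin2, hcard2⟩ := edge_count_sub hadj1 hfin1
      obtain ⟨hfin3, hcard3⟩ := edge_count_sub hadj2 hfin2
      obtain ⟨hfin4, hcard4⟩ := edge_count_apex (T := {some (some none), some none, none})
        (Set.toFinite _) hfin3
      obtain ⟨hfin', hcard'⟩ := edge_count_iso φ hfin4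
      refine ⟨⟨hfin', ?_⟩, ?_⟩
      · rw [hcard', hcard4, ncard_apex_set, hcard3, hcard2, hcard1, hcardH]
        omega
      · have hj1 : j - 1 + 1 = j := by omega
        rw [← hj1]
        exact iso_Q φ hQ4
    · -- one edge subdivided twice
      subst he1eq
      have hadj1 : (subdivide H x y).Adj x' y' := (SimpleGraph.mem_edgeSet _).mp he1
      have hQ2 := sub_Q hadj1 hQ1
      have hadj2 : (subdivide (subdivide H x y) x' y').Adj none (some y') := by
        rw [subdivide_adj_none_some]
        exact Or.inr rfl
      have hQ3 := sub_Q hadj2 hQ2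
      have hbnon : ∃ w, (subdivide (subdivide (subdivide H x y) x' y')
          none (some y')).Adj (some none) w := by
        refine ⟨some (some x'), ?_⟩
        rw [subdivide_adj_some_some]
        constructor
        · rw [subdivide_adj_none_some]
          exact Or.inl rfl
        · intro hcontra
          rw [Sym2.eq_iff] at hcontra
          rcases hcontra with ⟨h1, h2⟩ | ⟨h1, h2⟩
          · exact hadj1.ne (Option.some_injective _ h2)
          · exact absurd h1 (by simp)
      have hcnon : ∃ w, (subdivide (subdivide (subdivide H x y) x' y')
          none (some y')).Adj none w := by
        refine ⟨some none, ?_⟩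
        rw [subdivide_adj_none_some]
        exact Or.inl rfl
      have hQ4 := apex_Q (a := some (some none)) hbnon hcnon hQ3
      obtain ⟨hfin2, hcard2⟩ := edge_count_sub hadj1 hfin1
      obtain ⟨hfin3, hcard3⟩ := edge_count_sub hadj2 hfin2
      obtain ⟨hfin4, hcard4⟩ := edge_count_apex (T := {some (some none), some none, none})
        (Set.toFinite _) hfin3
      obtain ⟨hfin', hcard'⟩ := edge_count_iso φ hfin4
      refine ⟨⟨hfin', ?_⟩, ?_⟩
      · rw [hcard', hcard4, ncard_apex_set, hcard3, hcard2, hcard1, hcardH]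
        omega
      · have hj1 : j - 1 + 1 = j := by omega
        rw [← hj1]
        exact iso_Q φ hQ4
  | subd hj hH hxy hG ih =>
    obtain ⟨⟨hfinH, hcardH⟩, hQH⟩ := ih
    obtain ⟨φ⟩ := hG
    obtain ⟨hfin1, hcard1⟩ := edge_count_sub hxy hfinH
    obtain ⟨hfin', hcard'⟩ := edge_count_iso φ hfin1
    exact ⟨⟨hfin', by omega⟩, iso_Q φ (sub_Q hxy hQH)⟩

/-- for `G ∈ F_{i,j}` and any edge `e`,
`φ(G - e) ≤ t_g |E(G)| + ε_g(G) - 1`. -/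
theorem statement11 (g : ℕ) (hg : g = 4 ∨ g = 5) (i j : ℕ) (hi : 1 ≤ i) (hj : j ≤ i)
    {V : Type} [Fintype V] (G : SimpleGraph V) (hG : MemF i j G) :
    ∀ e ∈ G.edgeSet,
      (fvs (G.deleteEdges {e}) : ℝ) ≤
        tg g * G.edgeSet.ncard +
          max (1 - (j : ℝ) * (5 * tg g - 1) - (i : ℝ) * tg g) 0 - 1 := by
  intro e he
  obtain ⟨⟨hfin, hcard⟩, hQ⟩ := main_ind hG
  obtain ⟨S, hSfin, hScard, hacyc⟩ := hQ e he
  have h1 : fvs (G.deleteEdges {e}) ≤ S.ncard := fvs_le_of_cut hacyc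
  have h2 : (fvs (G.deleteEdges {e}) : ℝ) ≤ (j : ℝ) := by
    exact_mod_cast le_trans h1 hScard
  refine le_trans h2 ?_
  have hc : (G.edgeSet.ncard : ℝ) = (i : ℝ) + 5 * (j : ℝ) := by
    rw [hcard]; push_cast; ring
  have hmax : (1 - (j : ℝ) * (5 * tg g - 1) - (i : ℝ) * tg g) ≤
      max (1 - (j : ℝ) * (5 * tg g - 1) - (i : ℝ) * tg g) 0 := le_max_left _ _
  have htg : tg g = 2 / 9 ∨ tg g = 1 / 5 := by
    rcases hg with rfl | rfl
    · exact Or.inl (by simp [tg])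
    · exact Or.inr (by simp [tg])
  rw [hc]
  rcases htg with h | h <;> rw [h] at hmax ⊢ <;> linarith [hmax]


end InducedForest
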